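/- Let P be a finite poset, I a nonempty finite family of ideals of P, and ε₁ < ε₂ in (0,1). Let L = {p ∈ P : deg_I(p) ≥ ε₁|I|} be the set of elements of degree at least ε₁|I| in I. If the number of members of I contained in L is at most (1−ε₂)|I|, then there exists an ideal S of P with L ⊆ S such that (1−ε₂)|I| ≤ |{I ∈ I : I ⊆ S}| < (1−(ε₂−ε₁))|I|. -/

import Mathlib

open scoped Classical

theorem balanced_ideal_exists {P : Type*} [PartialOrder P] [Fintype P]
    (𝓘 : Finset (Set P)) (h𝓘 : ∀ i ∈ 𝓘, IsLowerSet i) (hne : 𝓘.Nonempty)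
    (ε₁ ε₂ : ℝ) (h1 : 0 < ε₁) (h12 : ε₁ < ε₂) (h2 : ε₂ < 1)
    (L : Set P) (hL : L = {p : P | ε₁ * 𝓘.card ≤ (𝓘.filter (fun i => p ∈ i)).card})
    (hfew : ((𝓘.filter (fun i => i ⊆ L)).card : ℝ) ≤ (1 - ε₂) * 𝓘.card) :
    ∃ S : Set P, IsLowerSet S ∧ L ⊆ S ∧
      (1 - ε₂) * 𝓘.card ≤ ((𝓘.filter (fun i => i ⊆ S)).card : ℝ) ∧
      ((𝓘.filter (fun i => i ⊆ S)).card : ℝ) < (1 - (ε₂ - ε₁)) * 𝓘.card := by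
  have hn : (0:ℝ) < 𝓘.card := by exact_mod_cast Finset.card_pos.mpr hne
  have hgap : (1 - ε₂) * 𝓘.card < (1 - (ε₂ - ε₁)) * 𝓘.card := by
    have := mul_lt_mul_of_pos_right (show (1 - ε₂ : ℝ) < 1 - (ε₂ - ε₁) by linarith) hn
    exact this
  have hLlow : IsLowerSet L := by
    subst hL
    intro a b hba ha
    simp only [Set.mem_setOf_eq] at ha ⊢
    refine ha.trans ?_
    have hsub : 𝓘.filter (fun i => a ∈ i) ⊆ 𝓘.filter (fun i => b ∈ i) := by
      intro i hi
      simp only [Finset.mem_filter] at hi ⊢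
      exact ⟨hi.1, h𝓘 i hi.1 hba hi.2⟩
    exact_mod_cast Finset.card_le_card hsub
  suffices H : ∀ k (S : Set P), IsLowerSet S → L ⊆ S →
      (Sᶜ).ncard ≤ k →
      ((𝓘.filter (fun i => i ⊆ S)).card : ℝ) ≤ (1 - ε₂) * 𝓘.card →
      ∃ T : Set P, IsLowerSet T ∧ L ⊆ T ∧
        (1 - ε₂) * 𝓘.card ≤ ((𝓘.filter (fun i => i ⊆ T)).card : ℝ) ∧
        ((𝓘.filter (fun i => i ⊆ T)).card : ℝ) < (1 - (ε₂ - ε₁)) * 𝓘.card by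
    exact H _ L hLlow subset_rfl le_rfl hfew
  intro k
  induction k with
  | zero =>
    intro S hSlow hLS hcard hfS
    exfalso
    have hS : S = Set.univ := by
      have h2 : Sᶜ = ∅ :=
        (Set.ncard_eq_zero (Set.toFinite _)).mp (Nat.le_zero.mp hcard)
      simpa [Set.compl_empty_iff] using h2
    subst hS
    have : 𝓘.filter (fun i => i ⊆ (Set.univ : Set P)) = 𝓘 := by
      apply Finset.filter_true_of_mem
      intro i _
      exact Set.subset_univ i
    rw [this] at hfS
    nlinarith
  | succ k ih =>
    intro S hSlow hLS hcard hfS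
    by_cases hge : (1 - ε₂) * 𝓘.card ≤ ((𝓘.filter (fun i => i ⊆ S)).card : ℝ)
    · exact ⟨S, hSlow, hLS, hge, lt_of_le_of_lt hfS hgap⟩
    push_neg at hge
    -- S ≠ univ
    have hScne : (Sᶜ).toFinset.Nonempty := by
      rw [Set.toFinset_nonempty]
      by_contra hc
      rw [Set.not_nonempty_iff_eq_empty, Set.compl_empty_iff] at hc
      subst hc
      have : 𝓘.filter (fun i => i ⊆ (Set.univ : Set P)) = 𝓘 := by
        apply Finset.filter_true_of_mem
        intro i _
        exact Set.subset_univ i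
      rw [this] at hge
      nlinarith
    obtain ⟨p, hp, hpmin⟩ : ∃ m ∈ (Sᶜ).toFinset, ∀ x ∈ (Sᶜ).toFinset, ¬x < m := by
      obtain ⟨m, hm⟩ := Finset.exists_minimal hScne
      rw [minimal_iff_forall_lt] at hm
      exact ⟨m, hm.1, fun x hx hlt => hm.2 hlt hx⟩
    rw [Set.mem_toFinset] at hp
    have hpL : p ∉ L := fun h => hp (hLS h)
    set S' : Set P := S ∪ {p} with hS'def
    have hS'low : IsLowerSet S' := by
      intro a b hba ha
      rcases ha with ha | ha
      · exact Or.inl (hSlow hba ha)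
      · rcases eq_or_lt_of_le hba with rfl | hlt
        · exact Or.inr ha
        · left
          by_contra hb
          have hbmem : b ∈ (Sᶜ).toFinset := Set.mem_toFinset.mpr hb
          rw [Set.mem_singleton_iff] at ha
          subst ha
          exact hpmin b hbmem hlt
    have hLS' : L ⊆ S' := hLS.trans (Set.subset_union_left)
    -- degree bound
    have hdeg : ((𝓘.filter (fun i => p ∈ i)).card : ℝ) < ε₁ * 𝓘.card := by
      rw [hL] at hpL
      simp only [Set.mem_setOf_eq, not_le] at hpL
      exact hpL
    -- count bound
    have hsub : 𝓘.filter (fun i => i ⊆ S') ⊆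
        (𝓘.filter (fun i => i ⊆ S)) ∪ (𝓘.filter (fun i => p ∈ i)) := by
      intro i hi
      simp only [Finset.mem_filter, Finset.mem_union] at hi ⊢
      by_cases hpi : p ∈ i
      · exact Or.inr ⟨hi.1, hpi⟩
      · refine Or.inl ⟨hi.1, fun x hx => ?_⟩
        rcases hi.2 hx with h | h
        · exact h
        · rw [Set.mem_singleton_iff] at h; subst h; exact absurd hx hpi
    have hcount : ((𝓘.filter (fun i => i ⊆ S')).card : ℝ) ≤
        ((𝓘.filter (fun i => i ⊆ S)).card : ℝ) + ((𝓘.filter (fun i => p ∈ i)).card : ℝ) := by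
      have h1 := Finset.card_le_card hsub
      have h2 := Finset.card_union_le (𝓘.filter (fun i => i ⊆ S)) (𝓘.filter (fun i => p ∈ i))
      exact_mod_cast h1.trans h2
    have hcountlt : ((𝓘.filter (fun i => i ⊆ S')).card : ℝ) < (1 - (ε₂ - ε₁)) * 𝓘.card := by
      calc ((𝓘.filter (fun i => i ⊆ S')).card : ℝ)
          ≤ _ + _ := hcount
        _ < (1 - ε₂) * 𝓘.card + ε₁ * 𝓘.card := by linarith
        _ = (1 - (ε₂ - ε₁)) * 𝓘.card := by ring
    by_cases hge' : (1 - ε₂) * 𝓘.card ≤ ((𝓘.filter (fun i => i ⊆ S')).card : ℝ)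
    · exact ⟨S', hS'low, hLS', hge', hcountlt⟩
    push_neg at hge'
    refine ih S' hS'low hLS' ?_ hge'.le
    -- complement shrinks
    have hss : S'ᶜ ⊂ Sᶜ := by
      constructor
      · intro x hx
        exact fun hxS => hx (Or.inl hxS)
      · intro hsub2
        exact (hsub2 hp) (Or.inr rfl)
    have := Set.ncard_lt_ncard hss (Set.toFinite _)
    omega
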